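/- For the depolarizing map, the curve of states β(p) = √(1−3p/4)|00⟩ + √(p/4)|01⟩ + √(p/4)|10⟩ + √(p/4)|11⟩, for p ∈ [0,1], can be written as β(p) = e^{is}|a⟩ + e^{−is}|b⟩ with sin s = √(3p/4), where |a⟩ = (1/2)|00⟩ − (i/(2√3))(|01⟩ + |10⟩ + |11⟩) and |b⟩ = conj of |a⟩, which are orthogonal and satisfy ⟨a|a⟩ + ⟨b|b⟩ = 1. -/

import Mathlib

open Complex
open scoped ComplexInnerProductSpace

/-- The depolarizing ancilla curve `β(p)` in ℂ⁴ (basis `|00⟩,|01⟩,|10⟩,|11⟩`). -/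
noncomputable def betaDepol (p : ℝ) : EuclideanSpace ℂ (Fin 4) :=
  WithLp.toLp 2 ![(Real.sqrt (1 - 3 * p / 4) : ℂ), (Real.sqrt (p / 4) : ℂ),
    (Real.sqrt (p / 4) : ℂ), (Real.sqrt (p / 4) : ℂ)]

noncomputable def aDepol : EuclideanSpace ℂ (Fin 4) :=
  WithLp.toLp 2 ![(1 / 2 : ℂ), -(I / (2 * Real.sqrt 3)), -(I / (2 * Real.sqrt 3)),
    -(I / (2 * Real.sqrt 3))]

noncomputable def bDepol : EuclideanSpace ℂ (Fin 4) :=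
  WithLp.toLp 2 (fun i => starRingEnd ℂ (aDepol i))

theorem depol_curve_1PR (p : ℝ) (hp : p ∈ Set.Icc (0 : ℝ) 1)
    (s : ℝ) (hs : s ∈ Set.Icc (0 : ℝ) (Real.pi / 2))
    (hsin : Real.sin s = Real.sqrt (3 * p / 4)) :
    betaDepol p = Complex.exp (I * s) • aDepol + Complex.exp (-(I * s)) • bDepol ∧
    ⟪aDepol, bDepol⟫ = 0 ∧
    ‖aDepol‖ ^ 2 + ‖bDepol‖ ^ 2 = 1 := by
  obtain ⟨hp0, hp1⟩ := hp
  obtain ⟨hs0, hs1⟩ := hs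
  have h3 : (0:ℝ) < Real.sqrt 3 := Real.sqrt_pos.mpr (by norm_num)
  have h3' : ((Real.sqrt 3 : ℝ) : ℂ) ≠ 0 := by exact_mod_cast h3.ne'
  have hsq3 : ((Real.sqrt 3 : ℝ) : ℂ) * ((Real.sqrt 3 : ℝ) : ℂ) = 3 := by
    have : Real.sqrt 3 * Real.sqrt 3 = 3 := Real.mul_self_sqrt (by norm_num)
    exact_mod_cast this
  have hcos : Real.cos s = Real.sqrt (1 - 3 * p / 4) := by
    have hsin2 : Real.sin s ^ 2 = 3 * p / 4 := by
      rw [hsin, Real.sq_sqrt (by linarith)]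
    have hc0 : 0 ≤ Real.cos s := Real.cos_nonneg_of_mem_Icc ⟨by linarith [Real.pi_pos], hs1⟩
    have : Real.cos s ^ 2 = 1 - 3 * p / 4 := by
      have := Real.sin_sq_add_cos_sq s
      linarith
    rw [← this, Real.sqrt_sq hc0]
  have hsin'' : Real.sin s = Real.sqrt 3 * (Real.sqrt p / Real.sqrt 4) := by
    rw [hsin, show (3 * p / 4 : ℝ) = 3 * (p / 4) by ring, Real.sqrt_mul (by norm_num),
      Real.sqrt_div hp0]
  have key2 : ∀ c u r : ℂ, r ≠ 0 →
      u = -((c + r*u*I) * (I/(2*r))) + -((c - r*u*I) * (-I/(2*r))) := by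
    intro c u r hr
    field_simp
    linear_combination (2*u*r) * Complex.I_sq
  refine ⟨?_, ?_, ?_⟩
  · ext i
    have he1 : Complex.exp (I * s) = Real.cos s + Real.sin s * I := by
      rw [mul_comm, Complex.exp_mul_I, ← Complex.ofReal_cos, ← Complex.ofReal_sin]
    have he2 : Complex.exp (-(I * s)) = Real.cos s - Real.sin s * I := by
      rw [show -(I * (s:ℂ)) = ((-s : ℝ) : ℂ) * I by push_cast; ring, Complex.exp_mul_I,
        ← Complex.ofReal_cos, ← Complex.ofReal_sin, Real.cos_neg, Real.sin_neg]
      push_cast; ring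
    fin_cases i <;>
    · simp [betaDepol, aDepol, bDepol, map_ofNat, he1, he2]
      rw [← Complex.ofReal_cos, ← Complex.ofReal_sin, hcos, hsin'']
      push_cast
      ring_nf
      try rw [Complex.I_sq]
      try field_simp
      try ring
  · simp only [PiLp.inner_apply, Fin.sum_univ_four, aDepol, bDepol, Fin.isValue,
      Matrix.cons_val_zero, Matrix.cons_val_one, Matrix.head_cons, Matrix.cons_val_two,
      Matrix.tail_cons, Matrix.cons_val_three, RCLike.inner_apply, map_neg, map_div₀, map_mul,
      Complex.conj_I, Complex.conj_ofNat, Complex.conj_ofReal, map_one, map_ofNat]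
    field_simp
    have hj : ((Real.sqrt 3:ℝ):ℂ) * (↑(Real.sqrt 3))⁻¹ = 1 := mul_inv_cancel₀ h3'
    linear_combination (((Real.sqrt 3:ℝ):ℂ) * (↑(Real.sqrt 3))⁻¹)^4 * hsq3 +
      ((((Real.sqrt 3:ℝ):ℂ) * (↑(Real.sqrt 3))⁻¹)^3 + (((Real.sqrt 3:ℝ):ℂ) * (↑(Real.sqrt 3))⁻¹)^2 +
        ((Real.sqrt 3:ℝ):ℂ) * (↑(Real.sqrt 3))⁻¹ + 1) * hj +
      (1 - (((Real.sqrt 3:ℝ):ℂ) * (↑(Real.sqrt 3))⁻¹)^4) * hsq3 -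
      ((((Real.sqrt 3:ℝ):ℂ) * (↑(Real.sqrt 3))⁻¹)^3 + (((Real.sqrt 3:ℝ):ℂ) * (↑(Real.sqrt 3))⁻¹)^2 +
        ((Real.sqrt 3:ℝ):ℂ) * (↑(Real.sqrt 3))⁻¹ + 1) * hj + 3 * Complex.I_sq
  · have hnb : ∀ i, ‖bDepol i‖ = ‖aDepol i‖ := by
      intro i; simp [bDepol]
    have hn : ∀ (v : EuclideanSpace ℂ (Fin 4)), ‖v‖ ^ 2 = ∑ i, ‖v i‖ ^ 2 := by
      intro v
      rw [EuclideanSpace.norm_eq, Real.sq_sqrt (Finset.sum_nonneg fun i _ => sq_nonneg _)]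
    have hb : ‖(-(I / (2 * (Real.sqrt 3 : ℝ))) : ℂ)‖ = 1 / (2 * Real.sqrt 3) := by
      rw [norm_neg, norm_div, Complex.norm_I]
      rw [show ((2 * (Real.sqrt 3 : ℝ)) : ℂ) = ((2 * Real.sqrt 3 : ℝ) : ℂ) by push_cast; ring]
      rw [Complex.norm_real, Real.norm_eq_abs, abs_of_pos (by positivity)]
    rw [hn, hn, Fin.sum_univ_four, Fin.sum_univ_four]
    simp only [hnb]
    simp only [aDepol, Fin.isValue, Matrix.cons_val_zero, Matrix.cons_val_one, Matrix.head_cons,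
      Matrix.cons_val_two, Matrix.tail_cons, Matrix.cons_val_three, hb]
    have h33 : Real.sqrt 3 * Real.sqrt 3 = 3 := Real.mul_self_sqrt (by norm_num)
    have h12 : ‖(1/2 : ℂ)‖ = 1/2 := by norm_num
    rw [h12]
    have h112 : (1 / (2*Real.sqrt 3):ℝ)^2 = 1/12 := by
      rw [div_pow, mul_pow, sq (Real.sqrt 3), h33]; norm_num
    rw [h112]; norm_num
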